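/- Let $I(C_1)$ be the ideal of a twisted cubic $C_1 \subset \mathbb{P}^3$ and let $T \supseteq I(C_1)$ be a graded ideal of $S = \mathbb{C}[X_0,\dots,X_3]$ such that $S/T$ is Artinian Gorenstein of socle degree $2d-4$ and $T$ contains the Jacobian ideal $J_F$ of a smooth degree-$d$ surface containing $C_1$. If $P \in T$ is a homogeneous polynomial not in $I(C_1)$, then $\deg(P) \ge d - 3$. -/

import Mathlib

open MvPolynomial

noncomputable section
namespace TC

abbrev S4 := MvPolynomial (Fin 4) ℂ

/-- Restriction to the affine parametrization `X i ↦ u^i` of the twisted cubic. -/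
def ψ : S4 →ₐ[ℂ] Polynomial ℂ := aeval (fun i : Fin 4 => Polynomial.X ^ (i : ℕ))

def wt (m : Fin 4 →₀ ℕ) : ℕ := m 1 + 2 * m 2 + 3 * m 3

lemma deg4 (m : Fin 4 →₀ ℕ) : m.degree = m 0 + m 1 + m 2 + m 3 := by
  have : m.degree = ∑ i : Fin 4, m i := by
    rw [Finsupp.degree]
    exact Finset.sum_subset (Finset.subset_univ _)
      (fun i _ hi => Finsupp.notMem_support_iff.mp hi)
  rw [this, Fin.sum_univ_four]

lemma degree_sum_eq {g : S4} {n : ℕ} (hg : g.IsHomogeneous n) {m : Fin 4 →₀ ℕ}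
    (hm : coeff m g ≠ 0) : m 0 + m 1 + m 2 + m 3 = n := by
  by_contra hne
  exact hm (hg.coeff_eq_zero (by rw [deg4]; omega))

lemma psi_monomial (m : Fin 4 →₀ ℕ) (c : ℂ) :
    ψ (monomial m c) = Polynomial.C c * Polynomial.X ^ wt m := by
  rw [ψ, aeval_monomial, Finsupp.prod_fintype _ _ (fun i => pow_zero _), Fin.prod_univ_four,
    Polynomial.algebraMap_eq]
  show Polynomial.C c * ((Polynomial.X ^ ((0 : Fin 4) : ℕ)) ^ m 0 *
    (Polynomial.X ^ ((1 : Fin 4) : ℕ)) ^ m 1 * (Polynomial.X ^ ((2 : Fin 4) : ℕ)) ^ m 2 *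
    (Polynomial.X ^ ((3 : Fin 4) : ℕ)) ^ m 3) = _
  simp only [Fin.isValue, Fin.val_zero, Fin.val_one, Fin.val_two,
    (show ((3 : Fin 4) : ℕ) = 3 from rfl)]
  norm_num [← pow_mul, ← pow_add, wt]

lemma psi_eq_sum (g : S4) :
    ψ g = ∑ m ∈ g.support, Polynomial.C (coeff m g) * Polynomial.X ^ wt m := by
  conv_lhs => rw [← support_sum_monomial_coeff g]
  rw [map_sum]
  exact Finset.sum_congr rfl fun m _ => psi_monomial m _

lemma natDegree_psi_le {g : S4} {n : ℕ} (hg : g.IsHomogeneous n) :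
    (ψ g).natDegree ≤ 3 * n := by
  rw [psi_eq_sum]
  apply Polynomial.natDegree_sum_le_of_forall_le
  intro m hm
  have h1 : wt m ≤ 3 * n := by
    have := degree_sum_eq hg (mem_support_iff.mp hm)
    simp only [wt]; omega
  refine le_trans (Polynomial.natDegree_C_mul_le _ _) ?_
  simpa using h1

/-- canonical monomial of degree `n` mapping to `u^w`. -/
def cmono (n w : ℕ) : S4 :=
  if w % 3 = 0 then X 0 ^ (n - w / 3) * X 3 ^ (w / 3)
  else if w % 3 = 1 then X 0 ^ (n - 1 - w / 3) * X 1 * X 3 ^ (w / 3)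
  else X 0 ^ (n - 1 - w / 3) * X 2 * X 3 ^ (w / 3)

lemma psi_X (i : Fin 4) : ψ (X i) = Polynomial.X ^ (i : ℕ) := by simp [ψ]

lemma psi_cmono (n w : ℕ) : ψ (cmono n w) = Polynomial.X ^ w := by
  have hw : w % 3 = 0 ∨ w % 3 = 1 ∨ w % 3 = 2 := by omega
  rcases hw with h | h | h
  · rw [cmono, if_pos h, map_mul, map_pow, map_pow, psi_X, psi_X,
      (show ((0 : Fin 4) : ℕ) = 0 from rfl), (show ((3 : Fin 4) : ℕ) = 3 from rfl),
      ← pow_mul, ← pow_mul, ← pow_add]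
    congr 1; omega
  · rw [cmono, if_neg (by omega), if_pos h, map_mul, map_mul, map_pow, map_pow,
      psi_X, psi_X, psi_X,
      (show ((0 : Fin 4) : ℕ) = 0 from rfl), (show ((1 : Fin 4) : ℕ) = 1 from rfl),
      (show ((3 : Fin 4) : ℕ) = 3 from rfl),
      ← pow_mul, ← pow_mul, ← pow_add, ← pow_add]
    congr 1; omega
  · rw [cmono, if_neg (by omega), if_neg (by omega), map_mul, map_mul, map_pow, map_pow,
      psi_X, psi_X, psi_X,
      (show ((0 : Fin 4) : ℕ) = 0 from rfl), (show ((2 : Fin 4) : ℕ) = 2 from rfl),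
      (show ((3 : Fin 4) : ℕ) = 3 from rfl),
      ← pow_mul, ← pow_mul, ← pow_add, ← pow_add]
    congr 1; omega

lemma cmono_homog {n w : ℕ} (h : w ≤ 3 * n) : (cmono n w).IsHomogeneous n := by
  have hw : w % 3 = 0 ∨ w % 3 = 1 ∨ w % 3 = 2 := by omega
  rcases hw with hm | hm | hm
  · rw [cmono, if_pos hm]
    have h1 : (n - w / 3) + w / 3 = n := by omega
    have := (isHomogeneous_X_pow (0 : Fin 4) (n - w / 3) (R := ℂ)).mul
      (isHomogeneous_X_pow (3 : Fin 4) (w / 3))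
    rwa [h1] at this
  · rw [cmono, if_neg (by omega), if_pos hm]
    have h1 : ((n - 1 - w / 3) + 1) + w / 3 = n := by omega
    have := ((isHomogeneous_X_pow (0 : Fin 4) (n - 1 - w / 3) (R := ℂ)).mul
      (isHomogeneous_X ℂ 1)).mul (isHomogeneous_X_pow (3 : Fin 4) (w / 3))
    rwa [h1] at this
  · rw [cmono, if_neg (by omega), if_neg (by omega)]
    have h1 : ((n - 1 - w / 3) + 1) + w / 3 = n := by omega
    have := ((isHomogeneous_X_pow (0 : Fin 4) (n - 1 - w / 3) (R := ℂ)).mul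
      (isHomogeneous_X ℂ 2)).mul (isHomogeneous_X_pow (3 : Fin 4) (w / 3))
    rwa [h1] at this

section IC
variable {IC : Ideal S4}
  (hIC : IC = Ideal.span {X 0 * X 2 - X 1 ^ 2, X 1 * X 3 - X 2 ^ 2, X 0 * X 3 - X 1 * X 2})

include hIC

lemma hg1 : (X 0 * X 2 - X 1 ^ 2 : S4) ∈ IC := by
  rw [hIC]; exact Ideal.subset_span (by simp)
lemma hg2 : (X 1 * X 3 - X 2 ^ 2 : S4) ∈ IC := by
  rw [hIC]; exact Ideal.subset_span (by simp)
lemma hg3 : (X 0 * X 3 - X 1 * X 2 : S4) ∈ IC := by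
  rw [hIC]; exact Ideal.subset_span (by simp)

lemma mono_sub_cmono :
    ∀ k a b c e : ℕ, b + c ≤ k →
      (X 0 : S4) ^ a * X 1 ^ b * X 2 ^ c * X 3 ^ e
        - cmono (a + b + c + e) (b + 2 * c + 3 * e) ∈ IC := by
  intro k
  induction k with
  | zero =>
    intro a b c e hbc
    have hb : b = 0 := by omega
    have hc : c = 0 := by omega
    subst hb; subst hc
    have h0 : (0 + 2 * 0 + 3 * e) % 3 = 0 := by omega
    have hzero : (X 0 : S4) ^ a * X 1 ^ 0 * X 2 ^ 0 * X 3 ^ e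
        - cmono (a + 0 + 0 + e) (0 + 2 * 0 + 3 * e) = 0 := by
      rw [cmono, if_pos h0, (show (0 + 2 * 0 + 3 * e) / 3 = e by omega),
        (show a + 0 + 0 + e - e = a by omega)]
      ring
    rw [hzero]; exact Ideal.zero_mem IC
  | succ K IH =>
    intro a b c e hbc
    by_cases hb2 : 2 ≤ b
    · obtain ⟨b', rfl⟩ : ∃ b', b = b' + 2 := ⟨b - 2, by omega⟩
      have key : (X 0 : S4) ^ a * X 1 ^ (b' + 2) * X 2 ^ c * X 3 ^ e
          - X 0 ^ (a + 1) * X 1 ^ b' * X 2 ^ (c + 1) * X 3 ^ e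
          = -(X 0 ^ a * X 1 ^ b' * X 2 ^ c * X 3 ^ e) * (X 0 * X 2 - X 1 ^ 2) := by ring
      have h1 : (X 0 : S4) ^ a * X 1 ^ (b' + 2) * X 2 ^ c * X 3 ^ e
          - X 0 ^ (a + 1) * X 1 ^ b' * X 2 ^ (c + 1) * X 3 ^ e ∈ IC := by
        rw [key]; exact Ideal.mul_mem_left _ _ (hg1 hIC)
      have h2 := IH (a + 1) b' (c + 1) e (by omega)
      rw [(show a + 1 + b' + (c + 1) + e = a + (b' + 2) + c + e by omega),
        (show b' + 2 * (c + 1) + 3 * e = b' + 2 + 2 * c + 3 * e by omega)] at h2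
      have := Ideal.add_mem IC h1 h2
      rwa [sub_add_sub_cancel] at this
    · by_cases hc2 : 2 ≤ c
      · obtain ⟨c', rfl⟩ : ∃ c', c = c' + 2 := ⟨c - 2, by omega⟩
        have key : (X 0 : S4) ^ a * X 1 ^ b * X 2 ^ (c' + 2) * X 3 ^ e
            - X 0 ^ a * X 1 ^ (b + 1) * X 2 ^ c' * X 3 ^ (e + 1)
            = -(X 0 ^ a * X 1 ^ b * X 2 ^ c' * X 3 ^ e) * (X 1 * X 3 - X 2 ^ 2) := by ring
        have h1 : (X 0 : S4) ^ a * X 1 ^ b * X 2 ^ (c' + 2) * X 3 ^ e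
            - X 0 ^ a * X 1 ^ (b + 1) * X 2 ^ c' * X 3 ^ (e + 1) ∈ IC := by
          rw [key]; exact Ideal.mul_mem_left _ _ (hg2 hIC)
        have h2 := IH a (b + 1) c' (e + 1) (by omega)
        rw [(show a + (b + 1) + c' + (e + 1) = a + b + (c' + 2) + e by omega),
          (show b + 1 + 2 * c' + 3 * (e + 1) = b + 2 * (c' + 2) + 3 * e by omega)] at h2
        have := Ideal.add_mem IC h1 h2
        rwa [sub_add_sub_cancel] at this
      · by_cases hbc1 : 1 ≤ b ∧ 1 ≤ c
        · obtain ⟨b', rfl⟩ : ∃ b', b = b' + 1 := ⟨b - 1, by omega⟩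
          obtain ⟨c', rfl⟩ : ∃ c', c = c' + 1 := ⟨c - 1, by omega⟩
          have key : (X 0 : S4) ^ a * X 1 ^ (b' + 1) * X 2 ^ (c' + 1) * X 3 ^ e
              - X 0 ^ (a + 1) * X 1 ^ b' * X 2 ^ c' * X 3 ^ (e + 1)
              = (X 0 ^ a * X 1 ^ b' * X 2 ^ c' * X 3 ^ e) * (X 1 * X 2 - X 0 * X 3) := by ring
          have h1 : (X 0 : S4) ^ a * X 1 ^ (b' + 1) * X 2 ^ (c' + 1) * X 3 ^ e
              - X 0 ^ (a + 1) * X 1 ^ b' * X 2 ^ c' * X 3 ^ (e + 1) ∈ IC := by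
            rw [key]
            have hneg : (X 1 * X 2 - X 0 * X 3 : S4) = -(X 0 * X 3 - X 1 * X 2) := by ring
            rw [hneg, mul_neg]
            exact neg_mem (Ideal.mul_mem_left _ _ (hg3 hIC))
          have h2 := IH (a + 1) b' c' (e + 1) (by omega)
          rw [(show a + 1 + b' + c' + (e + 1) = a + (b' + 1) + (c' + 1) + e by omega),
            (show b' + 2 * c' + 3 * (e + 1) = b' + 1 + 2 * (c' + 1) + 3 * e by omega)] at h2
          have := Ideal.add_mem IC h1 h2
          rwa [sub_add_sub_cancel] at this
        · have hsplit : b = 0 ∧ c = 0 ∨ b = 1 ∧ c = 0 ∨ b = 0 ∧ c = 1 := by omega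
          rcases hsplit with ⟨rfl, rfl⟩ | ⟨rfl, rfl⟩ | ⟨rfl, rfl⟩
          · have h0 : (0 + 2 * 0 + 3 * e) % 3 = 0 := by omega
            have hzero : (X 0 : S4) ^ a * X 1 ^ 0 * X 2 ^ 0 * X 3 ^ e
                - cmono (a + 0 + 0 + e) (0 + 2 * 0 + 3 * e) = 0 := by
              rw [cmono, if_pos h0, (show (0 + 2 * 0 + 3 * e) / 3 = e by omega),
                (show a + 0 + 0 + e - e = a by omega)]
              ring
            rw [hzero]; exact Ideal.zero_mem IC
          · have h0 : ¬((1 + 2 * 0 + 3 * e) % 3 = 0) := by omega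
            have h1 : (1 + 2 * 0 + 3 * e) % 3 = 1 := by omega
            have hzero : (X 0 : S4) ^ a * X 1 ^ 1 * X 2 ^ 0 * X 3 ^ e
                - cmono (a + 1 + 0 + e) (1 + 2 * 0 + 3 * e) = 0 := by
              rw [cmono, if_neg h0, if_pos h1, (show (1 + 2 * 0 + 3 * e) / 3 = e by omega),
                (show a + 1 + 0 + e - 1 - e = a by omega)]
              ring
            rw [hzero]; exact Ideal.zero_mem IC
          · have h0 : ¬((0 + 2 * 1 + 3 * e) % 3 = 0) := by omega
            have h1 : ¬((0 + 2 * 1 + 3 * e) % 3 = 1) := by omega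
            have hzero : (X 0 : S4) ^ a * X 1 ^ 0 * X 2 ^ 1 * X 3 ^ e
                - cmono (a + 0 + 1 + e) (0 + 2 * 1 + 3 * e) = 0 := by
              rw [cmono, if_neg h0, if_neg h1, (show (0 + 2 * 1 + 3 * e) / 3 = e by omega),
                (show a + 0 + 1 + e - 1 - e = a by omega)]
              ring
            rw [hzero]; exact Ideal.zero_mem IC

omit hIC in
lemma mono_expand (m : Fin 4 →₀ ℕ) (c : ℂ) :
    (monomial m c : S4) = C c * (X 0 ^ m 0 * X 1 ^ m 1 * X 2 ^ m 2 * X 3 ^ m 3) := by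
  rw [monomial_eq, Finsupp.prod_fintype _ _ (fun i => pow_zero _), Fin.prod_univ_four]

lemma psi_ker {n : ℕ} {Q : S4} (hQ : Q.IsHomogeneous n) (h0 : ψ Q = 0) : Q ∈ IC := by
  classical
  have hM : Q - (∑ m ∈ Q.support, C (coeff m Q) * cmono n (wt m)) ∈ IC := by
    have hrw : Q - (∑ m ∈ Q.support, C (coeff m Q) * cmono n (wt m))
        = ∑ m ∈ Q.support, C (coeff m Q) *
            ((X 0 ^ m 0 * X 1 ^ m 1 * X 2 ^ m 2 * X 3 ^ m 3) - cmono n (wt m)) := by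
      rw [Finset.sum_congr rfl (fun m (_ : m ∈ Q.support) => mul_sub (C (coeff m Q))
        (X 0 ^ m 0 * X 1 ^ m 1 * X 2 ^ m 2 * X 3 ^ m 3) (cmono n (wt m))),
        Finset.sum_sub_distrib]
      congr 1
      conv_lhs => rw [← support_sum_monomial_coeff Q]
      exact Finset.sum_congr rfl fun m _ => mono_expand m _
    rw [hrw]
    refine Ideal.sum_mem _ fun m hm => Ideal.mul_mem_left _ _ ?_
    have hs := degree_sum_eq hQ (mem_support_iff.mp hm)
    have hkey := mono_sub_cmono hIC (m 1 + m 2) (m 0) (m 1) (m 2) (m 3) le_rfl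
    rw [hs] at hkey
    simpa only [wt] using hkey
  have hMN : (∑ m ∈ Q.support, C (coeff m Q) * cmono n (wt m))
      = ∑ w' ∈ Finset.range (3 * n + 1), C ((ψ Q).coeff w') * cmono n w' := by
    have hcoeff : ∀ w', (ψ Q).coeff w' = ∑ m ∈ Q.support,
        (if wt m = w' then coeff m Q else 0) := by
      intro w'
      rw [psi_eq_sum, Polynomial.finset_sum_coeff]
      refine Finset.sum_congr rfl fun m _ => ?_
      rw [Polynomial.coeff_C_mul, Polynomial.coeff_X_pow]
      by_cases h : wt m = w'
      · simp [h]
      · simp [h, Ne.symm h]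
    calc ∑ m ∈ Q.support, C (coeff m Q) * cmono n (wt m)
        = ∑ m ∈ Q.support, ∑ w' ∈ Finset.range (3 * n + 1),
            (if wt m = w' then C (coeff m Q) * cmono n w' else 0) := by
          refine Finset.sum_congr rfl fun m hm => ?_
          rw [Finset.sum_ite_eq (Finset.range (3 * n + 1)) (wt m)
            (fun w' => C (coeff m Q) * cmono n w'), if_pos]
          refine Finset.mem_range.mpr ?_
          have := degree_sum_eq hQ (mem_support_iff.mp hm)
          simp only [wt]; omega
      _ = ∑ w' ∈ Finset.range (3 * n + 1), ∑ m ∈ Q.support,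
            (if wt m = w' then C (coeff m Q) * cmono n w' else 0) := Finset.sum_comm
      _ = ∑ w' ∈ Finset.range (3 * n + 1), C ((ψ Q).coeff w') * cmono n w' := by
          refine Finset.sum_congr rfl fun w' _ => ?_
          rw [hcoeff w', map_sum, Finset.sum_mul]
          refine Finset.sum_congr rfl fun m _ => ?_
          by_cases h : wt m = w' <;> simp [h]
  rw [hMN, h0] at hM
  simpa using hM

end IC

lemma psi_surj (n : ℕ) (r : Polynomial ℂ) (hr : r.natDegree ≤ 3 * n) :
    ∃ U : S4, U.IsHomogeneous n ∧ ψ U = r := by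
  refine ⟨∑ w' ∈ Finset.range (3 * n + 1), C (r.coeff w') * cmono n w', ?_, ?_⟩
  · exact IsHomogeneous.sum _ _ _ fun w' hw' =>
      (cmono_homog (Nat.lt_succ_iff.mp (Finset.mem_range.mp hw'))).C_mul _
  · rw [map_sum]
    conv_rhs => rw [Polynomial.as_sum_range' r (3 * n + 1) (by omega)]
    refine Finset.sum_congr rfl fun w' _ => ?_
    rw [map_mul, psi_cmono, ← Polynomial.C_mul_X_pow_eq_monomial]
    congr 1
    simp [ψ, Polynomial.algebraMap_eq]

lemma bezout (p q r : Polynomial ℂ) (hpq : IsCoprime p q) (hq : q ≠ 0) :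
    ∃ u v : Polynomial ℂ, r = p * u + q * v ∧ (u = 0 ∨ u.natDegree < q.natDegree) ∧
      (v = 0 ∨ q.natDegree + v.natDegree ≤ max r.natDegree (p.natDegree + u.natDegree)) := by
  obtain ⟨x, y, hxy⟩ := hpq
  set q' := q * Polynomial.C q.leadingCoeff⁻¹ with hq'def
  have hm : q'.Monic := Polynomial.monic_mul_leadingCoeff_inv hq
  set u := (x * r) %ₘ q' with hu_def
  set D := (x * r) /ₘ q' with hD_def
  have hdiv : u + q' * D = x * r := Polynomial.modByMonic_add_div _ _
  set v := y * r + p * (Polynomial.C q.leadingCoeff⁻¹ * D) with hv_def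
  have hmain : r = p * u + q * v := by
    have h1 : p * u + q * v = p * (u + q' * D) + (y * q) * r := by
      rw [hv_def, hq'def]; ring
    rw [h1, hdiv]
    linear_combination r * hxy.symm
  refine ⟨u, v, hmain, ?_, ?_⟩
  · rcases eq_or_ne u 0 with h | h
    · exact Or.inl h
    · refine Or.inr (Polynomial.natDegree_lt_natDegree h ?_)
      have := Polynomial.degree_modByMonic_lt (x * r) hm
      rwa [← hu_def, hq'def, Polynomial.degree_mul_leadingCoeff_inv _ hq] at this
  · rcases eq_or_ne v 0 with h | h
    · exact Or.inl h
    · refine Or.inr ?_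
      have hqv : q * v = r - p * u := by rw [hmain]; ring
      have h1 : (q * v).natDegree = q.natDegree + v.natDegree :=
        Polynomial.natDegree_mul hq h
      have h2 : (r - p * u).natDegree ≤ max r.natDegree (p * u).natDegree :=
        Polynomial.natDegree_sub_le _ _
      have h3 : (p * u).natDegree ≤ p.natDegree + u.natDegree :=
        Polynomial.natDegree_mul_le
      rw [← h1, hqv]
      exact le_trans h2 (max_le_max le_rfl h3)

lemma coprime_of_no_common_root {p q : Polynomial ℂ} (hp : p ≠ 0)
    (h : ∀ z : ℂ, p.eval z = 0 → q.eval z ≠ 0) : IsCoprime p q := by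
  classical
  by_contra hc
  set g := EuclideanDomain.gcd p q with hg
  have hgu : ¬IsUnit g := by
    intro hu
    obtain ⟨w, hw⟩ := isUnit_iff_exists_inv.mp hu
    apply hc
    refine ⟨EuclideanDomain.gcdA p q * w, EuclideanDomain.gcdB p q * w, ?_⟩
    have := EuclideanDomain.gcd_eq_gcd_ab p q
    calc EuclideanDomain.gcdA p q * w * p + EuclideanDomain.gcdB p q * w * q
        = (p * EuclideanDomain.gcdA p q + q * EuclideanDomain.gcdB p q) * w := by ring
      _ = g * w := by rw [← this]
      _ = 1 := hw
  have hg0 : g ≠ 0 := by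
    intro h0
    rw [hg, EuclideanDomain.gcd_eq_zero_iff] at h0
    exact hp h0.1
  have hdeg : 0 < g.degree := by
    rcases lt_or_eq_of_le (Polynomial.zero_le_degree_iff.mpr hg0) with h' | h'
    · exact h'
    · exact absurd (Polynomial.isUnit_iff_degree_eq_zero.mpr h'.symm) hgu
  obtain ⟨z, hz⟩ := Complex.exists_root hdeg
  obtain ⟨p', hp'⟩ := EuclideanDomain.gcd_dvd_left p q
  obtain ⟨q', hq'⟩ := EuclideanDomain.gcd_dvd_right p q
  have hz' : Polynomial.eval z (EuclideanDomain.gcd p q) = 0 := hz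
  have hpz : p.eval z = 0 := by rw [hp', Polynomial.eval_mul, hz', zero_mul]
  exact h z hpz (by rw [hq', Polynomial.eval_mul, hz', zero_mul])


lemma pderiv_homog {g : S4} {n : ℕ} (hg : g.IsHomogeneous n) (j : Fin 4) :
    (pderiv j g).IsHomogeneous (n - 1) := by
  classical
  have hrep : pderiv j g = ∑ m ∈ g.support,
      monomial (m - Finsupp.single j 1) (coeff m g * (m j : ℂ)) := by
    conv_lhs => rw [← support_sum_monomial_coeff g]
    rw [map_sum]
    exact Finset.sum_congr rfl fun m _ => pderiv_monomial
  rw [hrep]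
  refine IsHomogeneous.sum _ _ _ fun m hm => ?_
  by_cases hj : m j = 0
  · simp only [hj, Nat.cast_zero, mul_zero, monomial_zero]
    exact isHomogeneous_zero _ _ _
  · refine isHomogeneous_monomial _ ?_
    rw [deg4]
    have hs := degree_sum_eq hg (mem_support_iff.mp hm)
    have hsub : ∀ i : Fin 4, (m - Finsupp.single j 1 : Fin 4 →₀ ℕ) i
        = m i - (if j = i then 1 else 0) := by
      intro i
      rw [Finsupp.tsub_apply, Finsupp.single_apply]
    rw [hsub 0, hsub 1, hsub 2, hsub 3]
    fin_cases j <;> simp_all <;> omega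

lemma aeval_eq_eval (f : Fin 4 → ℂ) (g : S4) : aeval f g = eval f g := by
  exact DFunLike.congr_fun (MvPolynomial.coe_aeval_eq_eval f) g

lemma eval_psi (z : ℂ) (g : S4) :
    (ψ g).eval z = eval (fun i : Fin 4 => z ^ (i : ℕ)) g := by
  have h := AlgHom.congr_fun
    (comp_aeval (fun i : Fin 4 => Polynomial.X ^ (i : ℕ)) (Polynomial.aeval z)) g
  simp only [AlgHom.coe_comp, Function.comp_apply] at h
  have h2 : (fun i : Fin 4 => (Polynomial.aeval z) ((Polynomial.X : Polynomial ℂ) ^ (i : ℕ)))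
      = fun i : Fin 4 => z ^ (i : ℕ) := by
    funext i; simp
  rw [ψ, ← Polynomial.coe_aeval_eq_eval z]
  show (Polynomial.aeval z) ((aeval fun i : Fin 4 => Polynomial.X ^ (i : ℕ)) g) = _
  rw [h, h2, aeval_eq_eval]

lemma eval_last {g : S4} {n : ℕ} (hg : g.IsHomogeneous n) :
    eval (![0,0,0,1] : Fin 4 → ℂ) g = coeff (Finsupp.single 3 n) g := by
  classical
  rw [eval_eq']
  rw [Finset.sum_eq_single (Finsupp.single 3 n)]
  · rw [Fin.prod_univ_four]
    simp [Finsupp.single_apply]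
  · intro m hm hne
    have hs := degree_sum_eq hg (mem_support_iff.mp hm)
    have h012 : m 0 ≠ 0 ∨ m 1 ≠ 0 ∨ m 2 ≠ 0 := by
      by_contra hcon
      push_neg at hcon
      apply hne
      have h3 : m 3 = n := by omega
      ext i
      fin_cases i <;>
        simp_all [Finsupp.single_apply]
    rw [Fin.prod_univ_four]
    rcases h012 with h | h | h <;> simp [zero_pow h]
  · intro hns
    rw [notMem_support_iff.mp hns, zero_mul]

lemma coeff_psi_top {g : S4} {n : ℕ} (hg : g.IsHomogeneous n) :
    (ψ g).coeff (3 * n) = coeff (Finsupp.single 3 n) g := by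
  classical
  rw [psi_eq_sum, Polynomial.finset_sum_coeff]
  rw [Finset.sum_eq_single (Finsupp.single 3 n)]
  · rw [Polynomial.coeff_C_mul, Polynomial.coeff_X_pow]
    have hwt : wt (Finsupp.single 3 n) = 3 * n := by
      simp [wt, Finsupp.single_apply]
    rw [hwt, if_pos rfl, mul_one]
  · intro m hm hne
    rw [Polynomial.coeff_C_mul, Polynomial.coeff_X_pow]
    have hs := degree_sum_eq hg (mem_support_iff.mp hm)
    have hw : ¬(3 * n = wt m) := by
      intro hw
      apply hne
      simp only [wt] at hw
      have h0 : m 0 = 0 ∧ m 1 = 0 ∧ m 2 = 0 ∧ m 3 = n := by omega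
      ext i
      fin_cases i <;> simp_all [Finsupp.single_apply]
    rw [if_neg hw, mul_zero]
  · intro hns
    rw [notMem_support_iff.mp hns, map_zero, zero_mul, Polynomial.coeff_zero]

lemma coeff_lin (a : Fin 4 → ℂ) (j : Fin 4) :
    coeff (Finsupp.single j 1) (∑ i : Fin 4, (X i : S4) * C (a i)) = a j := by
  classical
  rw [coeff_sum]
  have h : ∀ i : Fin 4, coeff (Finsupp.single j 1) ((X i : S4) * C (a i))
      = if i = j then a i else 0 := by
    intro i
    rw [mul_comm, coeff_C_mul, coeff_X']
    by_cases h : i = j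
    · rw [if_pos h, if_pos (by rw [h]), mul_one]
    · rw [if_neg (fun hh => h ((Finsupp.single_left_inj one_ne_zero).mp hh)), if_neg h,
        mul_zero]
  simp_rw [h]
  rw [Finset.sum_ite_eq' Finset.univ j a, if_pos (Finset.mem_univ j)]

lemma lin_ne_zero (a : Fin 4 → ℂ) (ha : a ≠ 0) :
    (∑ i : Fin 4, (X i : S4) * C (a i)) ≠ 0 := by
  obtain ⟨j, hj⟩ := Function.ne_iff.mp ha
  intro h0
  apply hj
  have h := coeff_lin a j
  rw [h0, coeff_zero] at h
  simpa using h.symm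

lemma exists_good (Z : Finset ℂ) (aa : ℂ → Fin 4 → ℂ) (ha : ∀ z ∈ Z, aa z ≠ 0)
    (t : Fin 4 → ℂ) (ht : t ≠ 0) :
    ∃ c : Fin 4 → ℂ, (∑ j : Fin 4, c j * t j) ≠ 0 ∧
      ∀ z ∈ Z, (∑ j : Fin 4, c j * aa z j) ≠ 0 := by
  classical
  set B : S4 := (∑ j : Fin 4, X j * C (t j)) * ∏ z ∈ Z, (∑ j : Fin 4, X j * C (aa z j))
    with hB
  have hB0 : B ≠ 0 := mul_ne_zero (lin_ne_zero t ht)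
    (Finset.prod_ne_zero_iff.mpr fun z hz => lin_ne_zero _ (ha z hz))
  have hex : ∃ c : Fin 4 → ℂ, eval c B ≠ 0 := by
    by_contra hall
    push_neg at hall
    exact hB0 (MvPolynomial.funext fun x => by rw [hall x, map_zero])
  obtain ⟨c, hc⟩ := hex
  rw [hB, map_mul, map_prod] at hc
  have heval : ∀ a : Fin 4 → ℂ,
      eval c (∑ j : Fin 4, (X j : S4) * C (a j)) = ∑ j : Fin 4, c j * a j := by
    intro a
    rw [map_sum]
    exact Finset.sum_congr rfl fun j _ => by rw [map_mul, eval_X, eval_C]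
  rw [heval] at hc
  refine ⟨c, fun h => hc (by rw [h, zero_mul]), fun z hz h => hc ?_⟩
  have hz0 : eval c (∑ j : Fin 4, (X j : S4) * C (aa z j)) = 0 := by rw [heval, h]
  rw [Finset.prod_eq_zero hz hz0, mul_zero]

end TC

end

open TC in
/-- Let `I(C₁) ⊂ S = ℂ[X₀,…,X₃]` be the ideal of the twisted cubic (the three quadric minors)
and `T ⊇ I(C₁)` a graded ideal such that `S/T` is Artinian Gorenstein of socle degree `2d - 4`
(degree-`(2d-4)` piece one-dimensional, higher pieces zero, pairings nondegenerate) and `T`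
contains the Jacobian ideal `J_F` of a smooth degree-`d` surface `{F = 0}` containing the
twisted cubic.  If `P ∈ T` is homogeneous of degree `e` with `P ∉ I(C₁)`, then `e ≥ d - 3`. -/
theorem degree_bound_outside_twisted_cubic (d : ℕ) (hd : 5 ≤ d)
    (IC : Ideal (MvPolynomial (Fin 4) ℂ))
    (hIC : IC = Ideal.span {X 0 * X 2 - X 1 ^ 2, X 1 * X 3 - X 2 ^ 2, X 0 * X 3 - X 1 * X 2})
    (F : MvPolynomial (Fin 4) ℂ) (hF : F.IsHomogeneous d)
    (hsm : ∀ x : Fin 4 → ℂ, (∀ j, eval x (pderiv j F) = 0) → x = 0)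
    (hFC : F ∈ IC)
    (T : Ideal (MvPolynomial (Fin 4) ℂ))
    (hThom : ∀ p ∈ T, ∀ k : ℕ, homogeneousComponent k p ∈ T)
    (hICT : IC ≤ T)
    (hJT : Ideal.span (Set.range fun j : Fin 4 => pderiv j F) ≤ T)
    (socT : Module.finrank ℂ
      (Submodule.map (Ideal.Quotient.mkₐ ℂ T).toLinearMap
        (homogeneousSubmodule (Fin 4) ℂ (2 * d - 4))) = 1)
    (vanT : ∀ k : ℕ, 2 * d - 4 < k →
      ∀ p : MvPolynomial (Fin 4) ℂ, p.IsHomogeneous k → p ∈ T)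
    (perfT : ∀ k, k ≤ 2 * d - 4 → ∀ p : MvPolynomial (Fin 4) ℂ, p.IsHomogeneous k →
      (∀ q : MvPolynomial (Fin 4) ℂ, q.IsHomogeneous (2 * d - 4 - k) → p * q ∈ T) → p ∈ T)
    (P : MvPolynomial (Fin 4) ℂ) (e : ℕ) (hPhom : P.IsHomogeneous e)
    (hPT : P ∈ T) (hPC : P ∉ IC) :
    d - 3 ≤ e := by
  classical
  by_contra hcon
  have hP1 : ψ P ≠ 0 := fun h => hPC (psi_ker hIC hPhom h)
  have hPdeg : (ψ P).natDegree ≤ 3 * e := natDegree_psi_le hPhom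
  have hpd : ∀ j : Fin 4, (pderiv j F).IsHomogeneous (d - 1) := fun j => pderiv_homog hF j
  set t : Fin 4 → ℂ := fun j => coeff (Finsupp.single 3 (d - 1)) (pderiv j F) with ht_def
  have ht : t ≠ 0 := by
    intro h0
    have hx : (![0, 0, 0, 1] : Fin 4 → ℂ) = 0 := by
      apply hsm
      intro j
      rw [eval_last (hpd j)]
      have h0j := congrFun h0 j
      rw [Pi.zero_apply] at h0j
      exact h0j
    have h3 := congrFun hx 3
    simp at h3
  set Z : Finset ℂ := (ψ P).roots.toFinset with hZ
  set aa : ℂ → Fin 4 → ℂ := fun z j => (ψ (pderiv j F)).eval z with haa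
  have haz : ∀ z ∈ Z, aa z ≠ 0 := by
    intro z _ h0
    have hx : (fun i : Fin 4 => z ^ (i : ℕ)) = 0 := by
      apply hsm
      intro j
      rw [← eval_psi]
      exact congrFun h0 j
    have hx0 := congrFun hx 0
    simp at hx0
  obtain ⟨c, hct, hcz⟩ := exists_good Z aa haz t ht
  set G : MvPolynomial (Fin 4) ℂ := ∑ j : Fin 4, C (c j) * pderiv j F with hG
  have hGT : G ∈ T := Ideal.sum_mem _ fun j _ =>
    Ideal.mul_mem_left _ _ (hJT (Ideal.subset_span (Set.mem_range_self j)))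
  have hGhom : G.IsHomogeneous (d - 1) :=
    IsHomogeneous.sum _ _ _ fun j _ => (hpd j).C_mul _
  have hq_sum : ψ G = ∑ j : Fin 4, Polynomial.C (c j) * ψ (pderiv j F) := by
    rw [hG, map_sum]
    refine Finset.sum_congr rfl fun j _ => ?_
    rw [map_mul]
    congr 1
    simp [ψ, Polynomial.algebraMap_eq]
  have hqc : (ψ G).coeff (3 * (d - 1)) = ∑ j : Fin 4, c j * t j := by
    rw [hq_sum, Polynomial.finset_sum_coeff]
    refine Finset.sum_congr rfl fun j _ => ?_
    rw [Polynomial.coeff_C_mul, coeff_psi_top (hpd j)]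
  have hq0 : ψ G ≠ 0 := fun h => hct (by rw [← hqc, h, Polynomial.coeff_zero])
  have hqd : (ψ G).natDegree = 3 * (d - 1) :=
    le_antisymm (natDegree_psi_le hGhom)
      (Polynomial.le_natDegree_of_ne_zero (by rw [hqc]; exact hct))
  have hcop : IsCoprime (ψ P) (ψ G) := by
    apply coprime_of_no_common_root hP1
    intro z hz h0
    have hzZ : z ∈ Z := by
      rw [hZ, Multiset.mem_toFinset, Polynomial.mem_roots hP1]
      exact hz
    apply hcz z hzZ
    have hGz : (ψ G).eval z = ∑ j : Fin 4, c j * aa z j := by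
      rw [hq_sum, Polynomial.eval_finset_sum]
      refine Finset.sum_congr rfl fun j _ => ?_
      rw [Polynomial.eval_mul, Polynomial.eval_C]
    rw [← hGz, h0]
  have hallT : ∀ Q : MvPolynomial (Fin 4) ℂ, Q.IsHomogeneous (2 * d - 4) → Q ∈ T := by
    intro Q hQ
    have hr : (ψ Q).natDegree ≤ 3 * (2 * d - 4) := natDegree_psi_le hQ
    obtain ⟨u, v, heq, hu, hv⟩ := bezout (ψ P) (ψ G) (ψ Q) hcop hq0
    have hund : u.natDegree ≤ 3 * d - 4 := by
      rcases hu with h | h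
      · rw [h, Polynomial.natDegree_zero]; omega
      · rw [hqd] at h; omega
    have hu3 : u.natDegree ≤ 3 * (2 * d - 4 - e) := by omega
    have hv3 : v.natDegree ≤ 3 * (d - 3) := by
      rcases hv with h | h
      · rw [h, Polynomial.natDegree_zero]; omega
      · have h2 : (ψ G).natDegree + v.natDegree ≤ 3 * (2 * d - 4) := by
          refine le_trans h (max_le hr ?_)
          calc (ψ P).natDegree + u.natDegree ≤ 3 * e + (3 * d - 4) := add_le_add hPdeg hund
            _ ≤ 3 * (2 * d - 4) := by omega
        rw [hqd] at h2; omega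
    obtain ⟨U, hUhom, hUpsi⟩ := psi_surj (2 * d - 4 - e) u hu3
    obtain ⟨V, hVhom, hVpsi⟩ := psi_surj (d - 3) v hv3
    have hPU : (P * U).IsHomogeneous (2 * d - 4) := by
      have hmul := hPhom.mul hUhom
      rwa [show e + (2 * d - 4 - e) = 2 * d - 4 by omega] at hmul
    have hGV : (G * V).IsHomogeneous (2 * d - 4) := by
      have hmul := hGhom.mul hVhom
      rwa [show (d - 1) + (d - 3) = 2 * d - 4 by omega] at hmul
    have hrem : Q - P * U - G * V ∈ IC := by
      apply psi_ker hIC ((hQ.sub hPU).sub hGV)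
      rw [map_sub, map_sub, map_mul, map_mul, hUpsi, hVpsi, heq]
      ring
    have hQrw : Q = (Q - P * U - G * V) + P * U + G * V := by ring
    rw [hQrw]
    exact add_mem (add_mem (hICT hrem) (Ideal.mul_mem_right _ _ hPT))
      (Ideal.mul_mem_right _ _ hGT)
  have hbot : Submodule.map (Ideal.Quotient.mkₐ ℂ T).toLinearMap
      (homogeneousSubmodule (Fin 4) ℂ (2 * d - 4)) = ⊥ := by
    rw [Submodule.eq_bot_iff]
    rintro x ⟨Q, hQ, rfl⟩
    have hQT : Q ∈ T := hallT Q ((mem_homogeneousSubmodule _ _).mp hQ)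
    show (Ideal.Quotient.mkₐ ℂ T).toLinearMap Q = 0
    simp only [AlgHom.toLinearMap_apply, Ideal.Quotient.mkₐ_eq_mk]
    rwa [Ideal.Quotient.eq_zero_iff_mem]
  rw [hbot, finrank_bot] at socT
  exact absurd socT (by norm_num)
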